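/- Let T ≥ 1, let ρ_1 ≥ ρ_2 ≥ … ≥ ρ_T > 0 with ρ_1 < 1, and let L_y > 0. For t = 1,…,T let x_t, x*_t ∈ ℝ^{d1}, let y*_t : ℝ^{d1} → ℝ^{d2} be L_y-Lipschitz, and let y_1,…,y_{T+1} ∈ ℝ^{d2} satisfy the contraction ‖y_{t+1} − y*_t(x_t)‖ ≤ ρ_t·‖y_t − y*_t(x_t)‖ for every t ∈ {1,…,T}. Then Σ_{t=1}^T ‖y_{t+1} − y*_t(x_t)‖ ≤ (1/(1 − ρ_1))·( ρ_1·‖y_1 − y*_1(x_1)‖ + 2·L_y·Σ_{t=1}^T ρ_t·‖x_t − x*_t‖ + Σ_{t=2}^T ρ_t·‖y*_{t-1}(x*_{t-1}) − y*_t(x*_t)‖ ). -/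

import Mathlib

open Finset

/-- Inner-estimation-error lemma (first powers): under the per-round contraction
`‖y_{t+1} − y*_t(x_t)‖ ≤ ρ_t‖y_t − y*_t(x_t)‖` with nonincreasing `ρ_t` and
`ρ_1 < 1`, the sum of inner errors is bounded in terms of the path-lengths. -/
theorem inner_error_first_power_bound
    (d1 d2 T : ℕ) (hT : 1 ≤ T)
    (ρ : ℕ → ℝ)
    (hmono : ∀ s t, 1 ≤ s → s ≤ t → t ≤ T → ρ t ≤ ρ s)
    (hpos : ∀ t ∈ Finset.Icc 1 T, 0 < ρ t)
    (hρ1 : ρ 1 < 1)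
    (Ly : ℝ) (hLy : 0 < Ly)
    (x xstar : ℕ → EuclideanSpace ℝ (Fin d1))
    (ystar : ℕ → EuclideanSpace ℝ (Fin d1) → EuclideanSpace ℝ (Fin d2))
    (hylip : ∀ t ∈ Finset.Icc 1 T, ∀ a b, ‖ystar t a - ystar t b‖ ≤ Ly * ‖a - b‖)
    (y : ℕ → EuclideanSpace ℝ (Fin d2))
    (hcontract : ∀ t ∈ Finset.Icc 1 T,
      ‖y (t + 1) - ystar t (x t)‖ ≤ ρ t * ‖y t - ystar t (x t)‖) :
    ∑ t ∈ Finset.Icc 1 T, ‖y (t + 1) - ystar t (x t)‖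
      ≤ (1 / (1 - ρ 1)) *
        (ρ 1 * ‖y 1 - ystar 1 (x 1)‖
          + 2 * Ly * ∑ t ∈ Finset.Icc 1 T, ρ t * ‖x t - xstar t‖
          + ∑ t ∈ Finset.Icc 2 T,
              ρ t * ‖ystar (t - 1) (xstar (t - 1)) - ystar t (xstar t)‖) := by
  have hρ1pos : (0:ℝ) < ρ 1 := hpos 1 (by simp [hT])
  have h1ρ : (0:ℝ) < 1 - ρ 1 := by linarith
  set e : ℕ → ℝ := fun t => ‖y (t + 1) - ystar t (x t)‖ with he
  set X : ℕ → ℝ := fun t => ‖x t - xstar t‖ with hX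
  set P : ℕ → ℝ := fun t => ‖ystar (t - 1) (xstar (t - 1)) - ystar t (xstar t)‖ with hP
  have henn : ∀ t, 0 ≤ e t := fun t => norm_nonneg _
  have hXnn : ∀ t, 0 ≤ X t := fun t => norm_nonneg _
  have hPnn : ∀ t, 0 ≤ P t := fun t => norm_nonneg _
  have hshift : ∀ f : ℕ → ℝ, ∑ t ∈ Finset.Icc 2 T, f (t - 1) = ∑ t ∈ Finset.Icc 1 (T-1), f t := by
    intro f
    have hm : Finset.Icc 2 T = (Finset.Icc 1 (T-1)).map (addRightEmbedding 1) := by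
      rw [Finset.map_add_right_Icc]
      congr 1
      omega
    rw [hm, Finset.sum_map]
    simp [addRightEmbedding]
  have hsplit : ∀ f : ℕ → ℝ, ∑ t ∈ Finset.Icc 1 T, f t = f 1 + ∑ t ∈ Finset.Icc 2 T, f t := by
    intro f
    have hm : Finset.Icc 1 T = insert 1 (Finset.Icc 2 T) := by
      ext t
      simp only [Finset.mem_Icc, Finset.mem_insert]
      omega
    rw [hm, Finset.sum_insert (by simp [Finset.mem_Icc])]
  -- key per-term bound for t ∈ [2, T]
  have key : ∀ t ∈ Finset.Icc 2 T,
      e t ≤ ρ 1 * e (t-1) + ρ t * (Ly * X (t-1) + P t + Ly * X t) := by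
    intro t ht
    rw [Finset.mem_Icc] at ht
    have ht1 : t ∈ Finset.Icc 1 T := by rw [Finset.mem_Icc]; omega
    have htm1 : t - 1 ∈ Finset.Icc 1 T := by rw [Finset.mem_Icc]; omega
    have hρt : 0 < ρ t := hpos t ht1
    have hρle : ρ t ≤ ρ 1 := hmono 1 t le_rfl (by omega) ht.2
    have hteq : t - 1 + 1 = t := by omega
    have hprev : e (t-1) = ‖y t - ystar (t-1) (x (t-1))‖ := by
      simp only [he, hteq]
    have htri : ‖y t - ystar t (x t)‖
        ≤ e (t-1) + (Ly * X (t-1) + P t + Ly * X t) := by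
      rw [hprev]
      have h1 : ‖ystar (t-1) (x (t-1)) - ystar (t-1) (xstar (t-1))‖ ≤ Ly * X (t-1) :=
        hylip (t-1) htm1 _ _
      have h2 : ‖ystar t (xstar t) - ystar t (x t)‖ ≤ Ly * X t := by
        have h := hylip t ht1 (xstar t) (x t)
        rw [norm_sub_rev (xstar t) (x t)] at h
        exact h
      calc ‖y t - ystar t (x t)‖
          = ‖(y t - ystar (t-1) (x (t-1))) + (ystar (t-1) (x (t-1)) - ystar (t-1) (xstar (t-1)))
              + (ystar (t-1) (xstar (t-1)) - ystar t (xstar t))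
              + (ystar t (xstar t) - ystar t (x t))‖ := by
            congr 1
            abel
        _ ≤ ‖(y t - ystar (t-1) (x (t-1))) + (ystar (t-1) (x (t-1)) - ystar (t-1) (xstar (t-1)))
              + (ystar (t-1) (xstar (t-1)) - ystar t (xstar t))‖
            + ‖ystar t (xstar t) - ystar t (x t)‖ := norm_add_le _ _
        _ ≤ ‖(y t - ystar (t-1) (x (t-1))) + (ystar (t-1) (x (t-1)) - ystar (t-1) (xstar (t-1)))‖
            + ‖ystar (t-1) (xstar (t-1)) - ystar t (xstar t)‖
            + ‖ystar t (xstar t) - ystar t (x t)‖ := by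
            gcongr
            exact norm_add_le _ _
        _ ≤ ‖y t - ystar (t-1) (x (t-1))‖ + ‖ystar (t-1) (x (t-1)) - ystar (t-1) (xstar (t-1))‖
            + ‖ystar (t-1) (xstar (t-1)) - ystar t (xstar t)‖
            + ‖ystar t (xstar t) - ystar t (x t)‖ := by
            gcongr
            exact norm_add_le _ _
        _ ≤ ‖y t - ystar (t-1) (x (t-1))‖ + (Ly * X (t-1) + P t + Ly * X t) := by
            rw [hP]
            linarith
    have hc := hcontract t ht1
    have : e t ≤ ρ t * (e (t-1) + (Ly * X (t-1) + P t + Ly * X t)) := by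
      calc e t ≤ ρ t * ‖y t - ystar t (x t)‖ := hc
        _ ≤ ρ t * (e (t-1) + (Ly * X (t-1) + P t + Ly * X t)) := by
            exact mul_le_mul_of_nonneg_left htri hρt.le
    nlinarith [henn (t-1)]
  -- sum the key bound over [2, T]
  have hsum2 : ∑ t ∈ Finset.Icc 2 T, e t
      ≤ ρ 1 * ∑ t ∈ Finset.Icc 2 T, e (t-1)
        + ∑ t ∈ Finset.Icc 2 T, ρ t * (Ly * X (t-1) + P t + Ly * X t) := by
    calc ∑ t ∈ Finset.Icc 2 T, e t
        ≤ ∑ t ∈ Finset.Icc 2 T, (ρ 1 * e (t-1) + ρ t * (Ly * X (t-1) + P t + Ly * X t)) :=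
          Finset.sum_le_sum key
      _ = _ := by rw [Finset.sum_add_distrib, Finset.mul_sum]
  -- bound the shifted error sum
  have hesub : ∑ t ∈ Finset.Icc 2 T, e (t-1) ≤ ∑ t ∈ Finset.Icc 1 T, e t := by
    rw [hshift]
    exact Finset.sum_le_sum_of_subset_of_nonneg
      (Finset.Icc_subset_Icc_right (Nat.sub_le T 1)) (fun t _ _ => henn t)
  -- bound the cross-term sums
  have hXsub1 : ∑ t ∈ Finset.Icc 2 T, ρ t * X (t-1) ≤ ∑ t ∈ Finset.Icc 1 T, ρ t * X t := by
    have h1 : ∑ t ∈ Finset.Icc 2 T, ρ t * X (t-1)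
        = ∑ t ∈ Finset.Icc 1 (T-1), ρ (t+1) * X t := by
      have := hshift (fun s => ρ (s+1) * X s)
      rw [← this]
      apply Finset.sum_congr rfl
      intro t ht
      rw [Finset.mem_Icc] at ht
      congr 2
      omega
    rw [h1]
    calc ∑ t ∈ Finset.Icc 1 (T-1), ρ (t+1) * X t
        ≤ ∑ t ∈ Finset.Icc 1 (T-1), ρ t * X t := by
          apply Finset.sum_le_sum
          intro t ht
          rw [Finset.mem_Icc] at ht
          exact mul_le_mul_of_nonneg_right
            (hmono t (t+1) ht.1 (Nat.le_succ t) (by omega)) (hXnn t)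
      _ ≤ ∑ t ∈ Finset.Icc 1 T, ρ t * X t := by
          apply Finset.sum_le_sum_of_subset_of_nonneg
            (Finset.Icc_subset_Icc_right (Nat.sub_le T 1))
          intro t ht _
          exact mul_nonneg (hpos t ht).le (hXnn t)
  have hXsub2 : ∑ t ∈ Finset.Icc 2 T, ρ t * X t ≤ ∑ t ∈ Finset.Icc 1 T, ρ t * X t := by
    apply Finset.sum_le_sum_of_subset_of_nonneg
    · exact Finset.Icc_subset_Icc (by omega) le_rfl
    · intro t ht _
      exact mul_nonneg (hpos t ht).le (hXnn t)
  -- expand the cross-term sum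
  have hcross : ∑ t ∈ Finset.Icc 2 T, ρ t * (Ly * X (t-1) + P t + Ly * X t)
      ≤ 2 * Ly * ∑ t ∈ Finset.Icc 1 T, ρ t * X t + ∑ t ∈ Finset.Icc 2 T, ρ t * P t := by
    have hexp : ∑ t ∈ Finset.Icc 2 T, ρ t * (Ly * X (t-1) + P t + Ly * X t)
        = Ly * ∑ t ∈ Finset.Icc 2 T, ρ t * X (t-1) + ∑ t ∈ Finset.Icc 2 T, ρ t * P t
          + Ly * ∑ t ∈ Finset.Icc 2 T, ρ t * X t := by
      rw [Finset.mul_sum, Finset.mul_sum, ← Finset.sum_add_distrib, ← Finset.sum_add_distrib]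
      apply Finset.sum_congr rfl
      intro t _
      ring
    rw [hexp]
    nlinarith [hXsub1, hXsub2]
  -- combine everything
  have hS1 : e 1 ≤ ρ 1 * ‖y 1 - ystar 1 (x 1)‖ := hcontract 1 (by simp [hT])
  have hmain : (1 - ρ 1) * (∑ t ∈ Finset.Icc 1 T, e t)
      ≤ ρ 1 * ‖y 1 - ystar 1 (x 1)‖
        + 2 * Ly * ∑ t ∈ Finset.Icc 1 T, ρ t * X t
        + ∑ t ∈ Finset.Icc 2 T, ρ t * P t := by
    have hS : ∑ t ∈ Finset.Icc 1 T, e t = e 1 + ∑ t ∈ Finset.Icc 2 T, e t := hsplit e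
    nlinarith [hsum2, hesub, hcross, hS1,
      mul_le_mul_of_nonneg_left hesub hρ1pos.le]
  rw [one_div, ← div_eq_inv_mul, le_div_iff₀ h1ρ]
  linarith [hmain]
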